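/- For d ≥ 2 and γ ∈ (0,1), the Lebesgue volume of the γ-hyperspherical sector C△_γ(w) (for any nonzero w ∈ R^d) equals (Vol(B)/2)·I_{1-γ²}((d-1)/2, 1/2), where Vol(B) = π^(d/2)/Γ(d/2+1). -/

import Mathlib

open MeasureTheory intervalIntegral Set Real

/-- The incomplete beta function `B(x, a, b) = ∫₀ˣ t^(a-1) (1-t)^(b-1) dt`. -/
noncomputable def incBeta (x a b : ℝ) : ℝ :=
  ∫ t in (0:ℝ)..x, t ^ (a - 1) * (1 - t) ^ (b - 1)

/-- The regularized incomplete beta function `I_x(a,b) = B(x,a,b) / B(1,a,b)`. -/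
noncomputable def regIncBeta (x a b : ℝ) : ℝ := incBeta x a b / incBeta 1 a b

/-- The `γ`-hyperspherical sector in direction `w` (excluding `0`). -/
def sector (d : ℕ) (γ : ℝ) (w : EuclideanSpace ℝ (Fin d)) : Set (EuclideanSpace ℝ (Fin d)) :=
  {x | ‖x‖ ≤ 1 ∧ x ≠ 0 ∧ γ ≤ (inner ℝ x w : ℝ) / (‖x‖ * ‖w‖)}

lemma betaIntegrand_intervalIntegrable {p q : ℝ} (hp : -1 < p) (hq : -1 < q)
    {x : ℝ} (hx0 : 0 ≤ x) (hx1 : x ≤ 1) :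
    IntervalIntegrable (fun u => u ^ p * (1 - u) ^ q) volume 0 x := by
  have h1 : IntervalIntegrable (fun u => u ^ p * (1 - u) ^ q) volume 0 (1/2) := by
    apply (intervalIntegrable_rpow' hp).mul_continuousOn
    intro u hu
    have : (1:ℝ) - u ≠ 0 := by
      rw [uIcc_of_le (by norm_num : (0:ℝ) ≤ 1/2)] at hu
      have := hu.2; intro h; nlinarith [hu.1]
    exact ((Real.continuousAt_rpow_const _ _ (Or.inl this)).comp
      (by fun_prop : ContinuousAt (fun u : ℝ => 1 - u) u)).continuousWithinAt
  have h2 : IntervalIntegrable (fun u => u ^ p * (1 - u) ^ q) volume (1/2) 1 := by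
    have hbase : IntervalIntegrable (fun u : ℝ => u ^ q) volume 0 (1/2) :=
      intervalIntegrable_rpow' hq
    have h3 : IntervalIntegrable (fun u : ℝ => (1 - u) ^ q) volume (1/2) 1 := by
      have := hbase.comp_sub_left 1
      norm_num at this
      exact this.symm
    apply h3.continuousOn_mul
    intro u hu
    have : u ≠ 0 := by
      rw [uIcc_of_le (by norm_num : (1:ℝ)/2 ≤ 1)] at hu
      intro h; rw [h] at hu; norm_num at hu
    exact (Real.continuousAt_rpow_const _ _ (Or.inl this)).continuousWithinAt
  exact (h1.trans h2).mono_set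
    (by rw [uIcc_of_le hx0, uIcc_of_le (by norm_num : (0:ℝ) ≤ 1)]; exact Icc_subset_Icc le_rfl hx1)

lemma incBeta_one_eq {a b : ℝ} (ha : 0 < a) (hb : 0 < b) :
    incBeta 1 a b = Real.Gamma a * Real.Gamma b / Real.Gamma (a + b) := by
  have hB : Complex.betaIntegral a b = ((incBeta 1 a b : ℝ) : ℂ) := by
    rw [Complex.betaIntegral, incBeta, ← intervalIntegral.integral_ofReal]
    apply intervalIntegral.integral_congr
    intro t ht
    rw [uIcc_of_le (by norm_num : (0:ℝ) ≤ 1)] at ht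
    push_cast
    rw [Complex.ofReal_cpow ht.1, Complex.ofReal_cpow (by linarith [ht.2])]
    push_cast
    ring
  have h := Complex.Gamma_mul_Gamma_eq_betaIntegral
    (s := a) (t := b) (by simpa using ha) (by simpa using hb)
  rw [hB] at h
  have : ((a:ℂ) + b) = ((a + b : ℝ) : ℂ) := by push_cast; ring
  rw [this, Complex.Gamma_ofReal, Complex.Gamma_ofReal, Complex.Gamma_ofReal] at h
  have h' : Real.Gamma a * Real.Gamma b = Real.Gamma (a + b) * incBeta 1 a b := by
    exact_mod_cast h
  have hG : Real.Gamma (a + b) ≠ 0 := (Real.Gamma_pos_of_pos (by linarith)).ne'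
  field_simp [h']
  linarith [h']

lemma incBeta_rec {a b x : ℝ} (ha : 0 < a) (hb : 0 < b) (hx0 : 0 ≤ x) (hx1 : x ≤ 1) :
    (a + b) * incBeta x (a + 1) b = a * incBeta x a b - x ^ a * (1 - x) ^ b := by
  have hia : IntervalIntegrable (fun u => u ^ (a-1) * (1 - u) ^ (b-1)) volume 0 x :=
    betaIntegrand_intervalIntegrable (by linarith) (by linarith) hx0 hx1
  have hib : IntervalIntegrable (fun u => u ^ a * (1 - u) ^ (b-1)) volume 0 x := by
    have := betaIntegrand_intervalIntegrable (p := a) (q := b - 1)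
      (by linarith) (by linarith) hx0 hx1
    exact this
  have key : ∫ u in (0:ℝ)..x,
      (a * (u ^ (a-1) * (1-u) ^ (b-1)) - (a + b) * (u ^ a * (1-u) ^ (b-1)))
      = x ^ a * (1 - x) ^ b - 0 ^ a * (1 - 0 : ℝ) ^ b := by
    apply intervalIntegral.integral_eq_sub_of_hasDerivAt_of_le hx0
    · apply Continuous.continuousOn
      apply Continuous.mul
      · exact continuous_iff_continuousAt.2 fun u =>
          Real.continuousAt_rpow_const _ _ (Or.inr ha.le)
      · exact (continuous_iff_continuousAt.2 fun u =>
          Real.continuousAt_rpow_const _ _ (Or.inr hb.le)).comp (by fun_prop)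
    · intro u hu
      have hu0 : u ≠ 0 := hu.1.ne'
      have hu1 : (1:ℝ) - u ≠ 0 := by have := hu.2; intro h; nlinarith
      have h1 : HasDerivAt (fun u : ℝ => u ^ a) (a * u ^ (a-1)) u :=
        Real.hasDerivAt_rpow_const (Or.inl hu0)
      have h2 : HasDerivAt (fun u : ℝ => (1 - u) ^ b) (b * (1-u) ^ (b-1) * (-1)) u := by
        have inner : HasDerivAt (fun u : ℝ => 1 - u) (-1) u := by
          simpa using (hasDerivAt_id u).const_sub (1:ℝ)
        exact (Real.hasDerivAt_rpow_const (p := b) (Or.inl hu1)).comp u inner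
      have := h1.mul h2
      refine this.congr_deriv ?_
      have e1 : u ^ a = u ^ (a-1) * u := by
        rw [← Real.rpow_add_one hu0]; ring_nf
      have e2 : (1-u) ^ b = (1-u) ^ (b-1) * (1-u) := by
        rw [← Real.rpow_add_one hu1]; ring_nf
      rw [e1, e2]; ring
    · exact (hia.const_mul a).sub (hib.const_mul (a + b))
  rw [intervalIntegral.integral_sub (hia.const_mul a) (hib.const_mul (a+b)),
    intervalIntegral.integral_const_mul, intervalIntegral.integral_const_mul] at key
  rw [Real.zero_rpow ha.ne', zero_mul, sub_zero] at key
  have : incBeta x (a+1) b = ∫ u in (0:ℝ)..x, u ^ a * (1-u) ^ (b-1) := by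
    unfold incBeta
    norm_num
  rw [this, incBeta]
  linarith [key]

lemma sqrt_pow_integral (n : ℕ) {γ : ℝ} (hγ0 : 0 < γ) (hγ1 : γ < 1) :
    ∫ t in γ..1, Real.sqrt (1 - t^2) ^ n
      = (1/2) * incBeta (1 - γ^2) ((n:ℝ)/2 + 1) (1/2) := by
  set s2 : ℝ := 1 - γ^2 with hs2
  have hs2pos : 0 < s2 := by nlinarith
  have hs2lt : s2 < 1 := by nlinarith
  set f : ℝ → ℝ := fun u => Real.sqrt (1 - u) with hf
  set f' : ℝ → ℝ := fun u => (1 / (2 * Real.sqrt (1 - u))) * (-1) with hf'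
  set g : ℝ → ℝ := fun t => Real.sqrt (1 - t^2) ^ n with hg
  have huIcc : uIcc (0:ℝ) s2 = Icc 0 s2 := uIcc_of_le hs2pos.le
  have hderiv : ∀ u ∈ uIcc (0:ℝ) s2, HasDerivAt f (f' u) u := by
    intro u hu
    rw [huIcc] at hu
    have h1u : (0:ℝ) < 1 - u := by have := hu.2; linarith
    have inner : HasDerivAt (fun u : ℝ => 1 - u) (-1) u := by
      simpa using (hasDerivAt_id u).const_sub (1:ℝ)
    exact (Real.hasDerivAt_sqrt h1u.ne').comp u inner
  have hcont : ContinuousOn f' (uIcc (0:ℝ) s2) := by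
    apply ContinuousOn.mul _ continuousOn_const
    apply ContinuousOn.div continuousOn_const
    · exact (continuous_const.mul
        (Real.continuous_sqrt.comp (continuous_const.sub continuous_id))).continuousOn
    · intro u hu
      rw [huIcc] at hu
      have h1u : (0:ℝ) < 1 - u := by have := hu.2; linarith
      positivity
  have hgc : Continuous g := by
    apply Continuous.pow
    exact Real.continuous_sqrt.comp (by fun_prop)
  have key := intervalIntegral.integral_comp_smul_deriv hderiv hcont hgc
  have hf0 : f 0 = 1 := by simp [hf]
  have hfs2 : f s2 = γ := by
    rw [hf]; simp only [hs2]
    rw [show (1:ℝ) - (1 - γ^2) = γ^2 by ring, Real.sqrt_sq hγ0.le]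
  rw [hf0, hfs2] at key
  have flip : ∫ t in γ..1, g t = -∫ t in (1:ℝ)..γ, g t := by
    rw [intervalIntegral.integral_symm]
  rw [flip, ← key, ← intervalIntegral.integral_neg]
  rw [incBeta, ← intervalIntegral.integral_const_mul]
  apply intervalIntegral.integral_congr
  intro u hu
  rw [huIcc] at hu
  have hu0 : (0:ℝ) ≤ u := hu.1
  have h1u : (0:ℝ) < 1 - u := by have := hu.2; linarith
  have hsq : f u ^ 2 = 1 - u := Real.sq_sqrt (by linarith)
  have hgfu : g (f u) = Real.sqrt u ^ n := by
    rw [hg]; simp only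
    rw [hsq, show (1:ℝ) - (1 - u) = u by ring]
  have e1 : Real.sqrt u ^ n = u ^ ((n:ℝ)/2) := by
    rw [Real.sqrt_eq_rpow, ← Real.rpow_natCast (u ^ ((1:ℝ)/2)) n, ← Real.rpow_mul hu0]
    congr 1; ring
  have e2 : (1 - u) ^ ((1:ℝ)/2 - 1) = (Real.sqrt (1-u))⁻¹ := by
    rw [show (1:ℝ)/2 - 1 = -(1/2) by norm_num, Real.rpow_neg h1u.le, ← Real.sqrt_eq_rpow]
  have hne : Real.sqrt (1 - u) ≠ 0 := by positivity
  simp only [Function.comp, smul_eq_mul, hf']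
  rw [hgfu, e1, show ((n:ℝ)/2 + 1 - 1) = (n:ℝ)/2 by ring, e2]
  field_simp

lemma volume_sum_sq_le (n : ℕ) (hn : 0 < n) {c : ℝ} (hc : 0 ≤ c) :
    volume {y : Fin n → ℝ | ∑ i, y i ^ 2 ≤ c} =
      ENNReal.ofReal (Real.sqrt c ^ n) *
        ENNReal.ofReal (Real.sqrt π ^ n / Real.Gamma (n/2+1)) := by
  haveI : Nonempty (Fin n) := ⟨⟨0, hn⟩⟩
  have hmp := EuclideanSpace.volume_preserving_symm_measurableEquiv_toLp (Fin n)
  have hms : MeasurableSet {y : Fin n → ℝ | ∑ i, y i ^ 2 ≤ c} := by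
    apply measurableSet_le _ measurable_const
    exact Finset.measurable_sum _ fun i _ => (measurable_pi_apply i).pow_const 2
  rw [← hmp.measure_preimage hms.nullMeasurableSet]
  have hpre : (MeasurableEquiv.toLp 2 (Fin n → ℝ)).symm ⁻¹' {y | ∑ i, y i ^ 2 ≤ c}
      = Metric.closedBall 0 (Real.sqrt c) := by
    ext z
    simp only [mem_preimage, mem_setOf_eq, Metric.mem_closedBall, dist_zero_right]
    have hz : ∀ i, (MeasurableEquiv.toLp 2 (Fin n → ℝ)).symm z i = z i := fun i => rfl
    simp_rw [hz]
    rw [EuclideanSpace.norm_eq, Real.sqrt_le_sqrt_iff hc]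
    simp_rw [Real.norm_eq_abs, sq_abs]
  rw [hpre, EuclideanSpace.volume_closedBall, Fintype.card_fin,
    ← ENNReal.ofReal_pow (Real.sqrt_nonneg c)]

lemma volume_sector_aux (n : ℕ) (hn : 0 < n) {γ : ℝ} (hγ0 : 0 < γ) (hγ1 : γ < 1) :
    volume {x : EuclideanSpace ℝ (Fin (n+1)) | 0 < x 0 ∧ ‖x‖^2 ≤ 1 ∧ γ^2 * ‖x‖^2 ≤ x 0 ^ 2}
      = ENNReal.ofReal (∫ t in (0:ℝ)..1,
            Real.sqrt (min (1 - t^2) ((1-γ^2)*t^2/γ^2)) ^ n)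
        * ENNReal.ofReal (Real.sqrt π ^ n / Real.Gamma (n/2+1)) := by
  set ρ : ℝ → ℝ := fun t => Real.sqrt (min (1 - t^2) ((1-γ^2)*t^2/γ^2)) with hρ
  have hρc : Continuous ρ := by
    apply Real.continuous_sqrt.comp
    fun_prop
  set T : Set (ℝ × (Fin n → ℝ)) :=
    {p | 0 < p.1 ∧ p.1^2 + ∑ i, p.2 i^2 ≤ 1 ∧ γ^2*(p.1^2 + ∑ i, p.2 i^2) ≤ p.1^2} with hTdef
  have hSmeas : Measurable (fun p : ℝ × (Fin n → ℝ) => p.1^2 + ∑ i, p.2 i^2) := by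
    apply Measurable.add
    · exact (measurable_fst.pow_const 2)
    · exact Finset.measurable_sum _ fun i _ =>
        ((measurable_pi_apply i).comp measurable_snd).pow_const 2
  have hT : MeasurableSet T := by
    apply MeasurableSet.inter
    · exact measurableSet_lt measurable_const measurable_fst
    apply MeasurableSet.inter
    · exact measurableSet_le hSmeas measurable_const
    · exact measurableSet_le (hSmeas.const_mul _) (measurable_fst.pow_const 2)
  set e1 := (MeasurableEquiv.toLp 2 (Fin (n+1) → ℝ)).symm with he1
  set e2 := MeasurableEquiv.piFinSuccAbove (fun _ : Fin (n+1) => ℝ) 0 with he2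
  have hnormsq : ∀ x : EuclideanSpace ℝ (Fin (n+1)),
      ‖x‖^2 = x 0 ^ 2 + ∑ j : Fin n, x j.succ ^ 2 := by
    intro x
    rw [EuclideanSpace.norm_eq, Real.sq_sqrt (by positivity)]
    simp_rw [Real.norm_eq_abs, sq_abs]
    exact Fin.sum_univ_succ _
  have hset : {x : EuclideanSpace ℝ (Fin (n+1)) | 0 < x 0 ∧ ‖x‖^2 ≤ 1 ∧ γ^2 * ‖x‖^2 ≤ x 0 ^ 2}
      = (⇑e2 ∘ ⇑e1) ⁻¹' T := by
    ext x
    simp only [mem_preimage, Function.comp_apply, mem_setOf_eq, hTdef]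
    have h1 : (e2 (e1 x)).1 = x 0 := rfl
    have h2 : ∀ j : Fin n, (e2 (e1 x)).2 j = x j.succ := fun j => rfl
    simp_rw [h1, h2, ← hnormsq x]
  rw [hset]
  have h12 : MeasurePreserving (⇑e2 ∘ ⇑e1) volume volume :=
    (volume_preserving_piFinSuccAbove (fun _ : Fin (n+1) => ℝ) 0).comp
      (EuclideanSpace.volume_preserving_symm_measurableEquiv_toLp _)
  rw [h12.measure_preimage hT.nullMeasurableSet]
  rw [Measure.volume_eq_prod, Measure.prod_apply hT]
  set κ := ENNReal.ofReal (Real.sqrt π ^ n / Real.Gamma (n/2+1)) with hκ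
  have hsec : ∀ t : ℝ, volume (Prod.mk t ⁻¹' T)
      = (Ioc (0:ℝ) 1).indicator (fun t => ENNReal.ofReal (ρ t ^ n) * κ) t := by
    intro t
    by_cases ht : t ∈ Ioc (0:ℝ) 1
    · rw [indicator_of_mem ht]
      have hc0 : 0 ≤ min (1 - t^2) ((1-γ^2)*t^2/γ^2) := by
        apply le_min
        · nlinarith [ht.1, ht.2]
        · have h1 : (0:ℝ) < γ^2 := by positivity
          have h2 : (0:ℝ) < 1 - γ^2 := by nlinarith
          positivity
      have hsec2 : Prod.mk t ⁻¹' T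
          = {y : Fin n → ℝ | ∑ i, y i ^ 2 ≤ min (1 - t^2) ((1-γ^2)*t^2/γ^2)} := by
        ext y
        simp only [mem_preimage, mem_setOf_eq, hTdef, le_min_iff]
        have hγ2 : (0:ℝ) < γ^2 := by positivity
        constructor
        · rintro ⟨-, h2, h3⟩
          constructor
          · linarith
          · rw [le_div_iff₀ hγ2]; nlinarith
        · rintro ⟨h1, h2⟩
          rw [le_div_iff₀ hγ2] at h2
          exact ⟨ht.1, by linarith, by nlinarith⟩
      rw [hsec2, volume_sum_sq_le n hn hc0]
    · rw [indicator_of_notMem ht]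
      have : Prod.mk t ⁻¹' T = ∅ := by
        ext y
        simp only [mem_preimage, mem_setOf_eq, hTdef, mem_empty_iff_false, iff_false]
        rintro ⟨h1, h2, h3⟩
        rcases not_and_or.1 (fun h : 0 < t ∧ t ≤ 1 => ht ⟨h.1, h.2⟩) with h | h
        · exact h h1
        · push_neg at h
          have hy : (0:ℝ) ≤ ∑ i, y i ^ 2 := by positivity
          nlinarith
      rw [this, measure_empty]
  rw [lintegral_congr hsec, lintegral_indicator measurableSet_Ioc _]
  rw [lintegral_mul_const (f := fun t => ENNReal.ofReal (ρ t ^ n)) _ ((hρc.pow n).measurable.ennreal_ofReal)]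
  congr 1
  rw [← ofReal_integral_eq_lintegral_ofReal]
  · rw [← intervalIntegral.integral_of_le (by norm_num : (0:ℝ) ≤ 1)]
  · exact ((hρc.pow n).integrableOn_Icc).mono_set Ioc_subset_Icc_self
  · filter_upwards with t
    positivity

lemma J_eq (n : ℕ) {γ : ℝ} (hγ0 : 0 < γ) (hγ1 : γ < 1) :
    ∫ t in (0:ℝ)..1, Real.sqrt (min (1 - t^2) ((1-γ^2)*t^2/γ^2)) ^ n
      = Real.sqrt (1-γ^2) ^ n * γ / (n+1)
        + (1/2) * incBeta (1-γ^2) ((n:ℝ)/2 + 1) (1/2) := by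
  have hγ2 : (0:ℝ) < γ^2 := by positivity
  set s := Real.sqrt (1-γ^2) with hs
  have hs2 : s^2 = 1-γ^2 := Real.sq_sqrt (by nlinarith)
  have hρc : Continuous fun t : ℝ => Real.sqrt (min (1 - t^2) ((1-γ^2)*t^2/γ^2)) := by
    apply Real.continuous_sqrt.comp; fun_prop
  have hsplit := intervalIntegral.integral_add_adjacent_intervals
    (μ := volume) (a := (0:ℝ)) (b := γ) (c := 1)
    ((hρc.pow n).intervalIntegrable _ _) ((hρc.pow n).intervalIntegrable _ _)
  simp only [Pi.pow_apply] at hsplit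
  rw [← hsplit]
  have part1 : ∫ t in (0:ℝ)..γ, Real.sqrt (min (1 - t^2) ((1-γ^2)*t^2/γ^2)) ^ n
      = s ^ n * γ / (n+1) := by
    have hcongr : ∀ t ∈ uIcc (0:ℝ) γ,
        Real.sqrt (min (1 - t^2) ((1-γ^2)*t^2/γ^2)) ^ n = t ^ n * (s/γ) ^ n := by
      intro t ht
      rw [uIcc_of_le hγ0.le] at ht
      have ht2 : t^2 ≤ γ^2 := by nlinarith [ht.1, ht.2]
      have hmin : min (1 - t^2) ((1-γ^2)*t^2/γ^2) = (1-γ^2)*t^2/γ^2 := by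
        apply min_eq_right
        rw [div_le_iff₀ hγ2]
        nlinarith
      rw [hmin, show (1-γ^2)*t^2/γ^2 = (t * (s/γ))^2 by
        rw [mul_pow, div_pow, hs2]; ring, Real.sqrt_sq (mul_nonneg ht.1 (by positivity)), mul_pow]
    rw [intervalIntegral.integral_congr hcongr, intervalIntegral.integral_mul_const,
      integral_pow]
    field_simp
    rw [zero_pow n.succ_ne_zero, sub_zero, div_pow, pow_succ]
    field_simp
  have part2 : ∫ t in γ..(1:ℝ), Real.sqrt (min (1 - t^2) ((1-γ^2)*t^2/γ^2)) ^ n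
      = (1/2) * incBeta (1-γ^2) ((n:ℝ)/2 + 1) (1/2) := by
    have hcongr : ∀ t ∈ uIcc γ (1:ℝ),
        Real.sqrt (min (1 - t^2) ((1-γ^2)*t^2/γ^2)) ^ n = Real.sqrt (1 - t^2) ^ n := by
      intro t ht
      rw [uIcc_of_le hγ1.le] at ht
      have ht2 : γ^2 ≤ t^2 := by nlinarith [ht.1, ht.2]
      have hmin : min (1 - t^2) ((1-γ^2)*t^2/γ^2) = 1 - t^2 := by
        apply min_eq_left
        rw [le_div_iff₀ hγ2]
        nlinarith
      rw [hmin]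
    rw [intervalIntegral.integral_congr hcongr]
    exact sqrt_pow_integral n hγ0 hγ1
  rw [part1, part2]

lemma sector_measurable (d : ℕ) (γ : ℝ) (w : EuclideanSpace ℝ (Fin d)) :
    MeasurableSet (sector d γ w) := by
  have h1 : MeasurableSet {x : EuclideanSpace ℝ (Fin d) | ‖x‖ ≤ 1} :=
    measurableSet_le continuous_norm.measurable measurable_const
  have h2 : MeasurableSet {x : EuclideanSpace ℝ (Fin d) | x ≠ 0} :=
    (measurableSet_singleton 0).compl
  have h3 : MeasurableSet {x : EuclideanSpace ℝ (Fin d) | γ ≤ (inner ℝ x w : ℝ) / (‖x‖ * ‖w‖)} := by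
    apply measurableSet_le measurable_const
    apply Measurable.div
    · exact (Continuous.inner continuous_id continuous_const).measurable
    · exact (continuous_norm.mul continuous_const).measurable
  exact (h1.inter (h2.inter h3))

lemma sector_reduction (n : ℕ) (γ : ℝ) (w : EuclideanSpace ℝ (Fin (n+1))) (hw : w ≠ 0) :
    volume (sector (n+1) γ w) = volume (sector (n+1) γ (EuclideanSpace.single 0 1)) := by
  set v : EuclideanSpace ℝ (Fin (n+1)) := EuclideanSpace.single 0 1 with hv
  have hvnorm : ‖v‖ = 1 := by simp [hv]
  have hwn : ‖w‖ ≠ 0 := norm_ne_zero_iff.2 hw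
  set u : EuclideanSpace ℝ (Fin (n+1)) := ‖w‖⁻¹ • w with hu
  have hun : ‖u‖ = 1 := by
    rw [hu, norm_smul, norm_inv, norm_norm, inv_mul_cancel₀ hwn]
  set R := Submodule.reflection (ℝ ∙ (u - v))ᗮ with hR
  have hRu : R u = v := Submodule.reflection_sub (by rw [hun, hvnorm])
  have hpre : sector (n+1) γ w = ⇑R ⁻¹' (sector (n+1) γ v) := by
    ext x
    simp only [sector, mem_preimage, mem_setOf_eq]
    rw [R.norm_map]
    simp only [ne_eq, EmbeddingLike.map_eq_zero_iff]
    have hinner : (inner ℝ (R x) v : ℝ) = ‖w‖⁻¹ * (inner ℝ x w : ℝ) := by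
      rw [← hRu, R.inner_map_map, hu, real_inner_smul_right]
    rw [hinner, hvnorm]
    have : ‖w‖⁻¹ * (inner ℝ x w : ℝ) / (‖x‖ * 1) = (inner ℝ x w : ℝ) / (‖x‖ * ‖w‖) := by
      rw [mul_one]
      by_cases hx : ‖x‖ = 0
      · rw [hx]; simp
      · rw [inv_mul_eq_div, div_div, mul_comm ‖w‖ ‖x‖]
    rw [this]
  rw [hpre, R.measurePreserving.measure_preimage
    (sector_measurable (n+1) γ v).nullMeasurableSet]

lemma sector_char (n : ℕ) {γ : ℝ} (hγ0 : 0 < γ) (hγ1 : γ < 1) :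
    sector (n+1) γ (EuclideanSpace.single 0 1)
      = {x : EuclideanSpace ℝ (Fin (n+1)) | 0 < x 0 ∧ ‖x‖^2 ≤ 1 ∧ γ^2*‖x‖^2 ≤ x 0^2} := by
  ext x
  simp only [sector, mem_setOf_eq]
  have hinner : (inner ℝ x (EuclideanSpace.single 0 (1:ℝ)) : ℝ) = x 0 := by
    rw [EuclideanSpace.inner_single_right]
    simp
  have hvnorm : ‖(EuclideanSpace.single 0 (1:ℝ) : EuclideanSpace ℝ (Fin (n+1)))‖ = 1 := by
    simp
  rw [hinner, hvnorm, mul_one]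
  constructor
  · rintro ⟨h1, h2, h3⟩
    have hx : 0 < ‖x‖ := norm_pos_iff.2 h2
    have h4 : γ * ‖x‖ ≤ x 0 := (le_div_iff₀ hx).1 h3
    have h5 : 0 < γ * ‖x‖ := by positivity
    refine ⟨by linarith, by nlinarith [norm_nonneg x], by nlinarith⟩
  · rintro ⟨h1, h2, h3⟩
    have hx0 : x ≠ 0 := by
      intro h
      rw [h] at h1
      simp at h1
    have hx : 0 < ‖x‖ := norm_pos_iff.2 hx0
    have h4 : γ * ‖x‖ ≤ x 0 := by
      have h := Real.sqrt_le_sqrt (show (γ*‖x‖)^2 ≤ (x 0)^2 by nlinarith)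
      rwa [Real.sqrt_sq (by positivity), Real.sqrt_sq h1.le] at h
    refine ⟨by nlinarith, hx0, ?_⟩
    rw [le_div_iff₀ hx]
    exact h4

/-- Volume of the hyperspherical sector:
`Vol(C△_γ(w)) = (Vol(B)/2) · I_{1-γ²}((d-1)/2, 1/2)` with
`Vol(B) = π^(d/2) / Γ(d/2 + 1)`. -/
theorem volume_sector (d : ℕ) (hd : 2 ≤ d) (γ : ℝ) (hγ : γ ∈ Set.Ioo (0:ℝ) 1)
    (w : EuclideanSpace ℝ (Fin d)) (hw : w ≠ 0) :
    (MeasureTheory.volume (sector d γ w)).toReal =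
      Real.pi ^ ((d:ℝ) / 2) / Real.Gamma ((d:ℝ) / 2 + 1) / 2 *
        regIncBeta (1 - γ ^ 2) (((d:ℝ) - 1) / 2) (1 / 2) := by
  obtain ⟨hγ0, hγ1⟩ := hγ
  obtain ⟨n, rfl⟩ : ∃ n, d = n + 1 := ⟨d - 1, by omega⟩
  have hn : 0 < n := by omega
  have hnR : (0:ℝ) < n := by exact_mod_cast hn
  rw [sector_reduction n γ w hw, sector_char n hγ0 hγ1, volume_sector_aux n hn hγ0 hγ1]
  have hγ2 : (0:ℝ) < γ^2 := by positivity
  set s := Real.sqrt (1-γ^2) with hs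
  have hs2 : s^2 = 1-γ^2 := Real.sq_sqrt (by nlinarith)
  have hs0 : 0 ≤ s := Real.sqrt_nonneg _
  have ha0 : (0:ℝ) < (n:ℝ)/2 := by positivity
  rw [J_eq n hγ0 hγ1]
  -- recurrence at x = 1 - γ²
  have hrec := incBeta_rec (a := (n:ℝ)/2) (b := 1/2) (x := 1-γ^2) ha0 (by norm_num)
    (by nlinarith) (by nlinarith)
  have hxa : (1-γ^2) ^ ((n:ℝ)/2) = s ^ n := by
    rw [← hs2, ← Real.rpow_natCast s 2, ← Real.rpow_mul hs0]
    rw [show ((2:ℕ):ℝ) * ((n:ℝ)/2) = (n:ℝ) by push_cast; ring, Real.rpow_natCast]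
  have hx1b : (1-(1-γ^2)) ^ ((1:ℝ)/2) = γ := by
    rw [show (1:ℝ)-(1-γ^2) = γ^2 by ring, ← Real.sqrt_eq_rpow, Real.sqrt_sq hγ0.le]
  rw [hxa, hx1b] at hrec
  -- nonnegativity for toReal
  have hIBnn : 0 ≤ incBeta (1-γ^2) ((n:ℝ)/2 + 1) (1/2) := by
    apply intervalIntegral.integral_nonneg (by nlinarith)
    intro u hu
    have h1 : (0:ℝ) ≤ u := hu.1
    have h2 : (0:ℝ) ≤ 1 - u := by nlinarith [hu.2]
    have e1 := Real.rpow_nonneg h1 ((n:ℝ)/2 + 1 - 1)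
    have e2 := Real.rpow_nonneg h2 ((1:ℝ)/2 - 1)
    positivity
  have hJ0 : 0 ≤ s ^ n * γ / (↑n + 1) + 1 / 2 * incBeta (1-γ^2) ((n:ℝ)/2 + 1) (1/2) := by
    positivity
  have hGpos : (0:ℝ) < Real.Gamma ((n:ℝ)/2 + 1) := Real.Gamma_pos_of_pos (by positivity)
  have hK0 : (0:ℝ) ≤ Real.sqrt π ^ n / Real.Gamma ((n:ℝ)/2 + 1) := by positivity
  rw [ENNReal.toReal_mul, ENNReal.toReal_ofReal hJ0, ENNReal.toReal_ofReal hK0]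
  -- right hand side normalization
  rw [regIncBeta]
  rw [show (((n+1:ℕ):ℝ) - 1)/2 = (n:ℝ)/2 by push_cast; ring]
  rw [show ((n+1:ℕ):ℝ)/2 = ((n:ℝ)+1)/2 by push_cast; ring]
  rw [incBeta_one_eq ha0 (by norm_num : (0:ℝ) < (1:ℝ)/2), Real.Gamma_one_half_eq]
  -- eliminate the (a+1)-incomplete beta using the recurrence
  have hIB1 : incBeta (1-γ^2) ((n:ℝ)/2 + 1) (1/2)
      = ((n:ℝ)/2 * incBeta (1-γ^2) ((n:ℝ)/2) (1/2) - s^n*γ) / ((n:ℝ)/2 + 1/2) := by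
    rw [eq_div_iff (by positivity)]
    linarith [hrec]
  rw [hIB1]
  -- Gamma and power simplifications
  have hGn2 : Real.Gamma ((n:ℝ)/2 + 1) = (n:ℝ)/2 * Real.Gamma ((n:ℝ)/2) :=
    Real.Gamma_add_one ha0.ne'
  have hGtop : Real.Gamma (((n:ℝ)+1)/2 + 1) = (((n:ℝ)+1)/2) * Real.Gamma (((n:ℝ)+1)/2) :=
    Real.Gamma_add_one (by positivity)
  have hGmid : Real.Gamma (((n:ℝ)+1)/2) = Real.Gamma ((n:ℝ)/2 + 1/2) := by
    congr 1; ring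
  have hP : Real.sqrt π ^ n = π ^ ((n:ℝ)/2) := by
    rw [Real.sqrt_eq_rpow, ← Real.rpow_natCast (π ^ ((1:ℝ)/2)) n, ← Real.rpow_mul pi_pos.le]
    congr 1; ring
  have hππ : π ^ (((n:ℝ)+1)/2) = π ^ ((n:ℝ)/2) * Real.sqrt π := by
    rw [Real.sqrt_eq_rpow, ← Real.rpow_add pi_pos]
    congr 1; ring
  rw [hGn2, hGtop, hGmid, hP, hππ]
  have hG1 : Real.Gamma ((n:ℝ)/2) ≠ 0 := (Real.Gamma_pos_of_pos ha0).ne'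
  have hG2 : Real.Gamma ((n:ℝ)/2 + 1/2) ≠ 0 := (Real.Gamma_pos_of_pos (by positivity)).ne'
  have hsqπ : Real.sqrt π ≠ 0 := by positivity
  have hπn : π ^ ((n:ℝ)/2) ≠ 0 := by positivity
  have hn1 : ((n:ℝ)+1) ≠ 0 := by positivity
  field_simp
  ring
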